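/- Let {X_m} be a sequence of complex numbers indexed by the integers satisfying X_m = f_1·X_{m-a} + f_2·X_{m-b} for all integers m, where f_1, f_2 are nonzero complex constants and a, b are integers. Then for every integer m and nonnegative integer k: ∑_{j=0}^{k} X_{m−(b−a)k+a+(b−a)j}/(−f_2/f_1)^j = f_1·X_m/(−f_2/f_1)^k + f_2·X_{m−(k+1)(b−a)}. -/

import Mathlib

theorem stmt4 (X : ℤ → ℂ) (f₁ f₂ : ℂ) (hf₁ : f₁ ≠ 0) (hf₂ : f₂ ≠ 0) (a b : ℤ)
    (hX : ∀ m : ℤ, X m = f₁ * X (m - a) + f₂ * X (m - b)) :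
    ∀ (m : ℤ) (k : ℕ),
      ∑ j ∈ Finset.range (k + 1), X (m - (b - a) * k + a + (b - a) * j) / (-f₂ / f₁) ^ j =
        f₁ * X m / (-f₂ / f₁) ^ k + f₂ * X (m - (k + 1) * (b - a)) := by
  intro m k
  induction k generalizing m with
  | zero =>
    simp only [Nat.cast_zero, mul_zero, sub_zero, pow_zero, div_one, Nat.cast_ofNat,
      Finset.range_one, Finset.sum_singleton, zero_add, Nat.cast_one, one_mul]
    have h := hX (m + a)
    simp only [add_sub_cancel_right] at h
    have e : m + a - b = m - (b - a) := by ring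
    rw [add_zero, h, e]
  | succ k ih =>
    rw [Finset.sum_range_succ]
    have h1 := ih (m - (b - a))
    have heq : ∀ j ∈ Finset.range (k + 1),
        X (m - (b - a) * (↑(k + 1) : ℤ) + a + (b - a) * j) / (-f₂ / f₁) ^ j =
        X (m - (b - a) - (b - a) * k + a + (b - a) * j) / (-f₂ / f₁) ^ j := by
      intro j _
      congr 2
      push_cast
      ring
    rw [Finset.sum_congr rfl heq, h1]
    have h := hX (m + a)
    simp only [add_sub_cancel_right] at h
    have hr : (-f₂ / f₁) ≠ 0 := by
      simp [hf₁, hf₂]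
    have harg1 : m - (b - a) * (↑(k + 1) : ℤ) + a + (b - a) * ↑(k + 1) = m + a := by
      push_cast; ring
    have harg2 : m - (b - a) - ((k : ℤ) + 1) * (b - a) = m - (((k + 1 : ℕ) : ℤ) + 1) * (b - a) := by
      push_cast; ring
    have e2 : m + a - b = m - (b - a) := by ring
    rw [harg1, harg2, h, e2, pow_succ]
    field_simp
    ring_nf
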